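/- Jensen-type bound used in the quantum TKUR proof: for finitely many pairs (σᵢ, aᵢ) with aᵢ > 0, setting σ = Σᵢ σᵢ and a = Σᵢ aᵢ, concavity of g(σ,a) = (σ²/a)Φ(σ/a)⁻² implies Σᵢ gᵢ(σᵢ, aᵢ) ≤ g(σ, a) ≤ min(σ/2, a) when each σᵢ = (xᵢ − yᵢ)ln(xᵢ/yᵢ) and aᵢ = xᵢ + yᵢ for positive xᵢ, yᵢ. In particular Σᵢ (xᵢ−yᵢ)²/(xᵢ+yᵢ) ≤ (σ²/(4a))Φ(σ/(2a))⁻² ≤ min(σ/2, a). -/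

import Mathlib

open Real Finset

noncomputable def FF (s : ℝ) : ℝ := ∑' k : ℕ, s ^ (k + 1) / (2 * (k : ℝ) + 1)

lemma summable_FF {s : ℝ} (h0 : 0 ≤ s) (h1 : s < 1) :
    Summable (fun k : ℕ => s ^ (k + 1) / (2 * (k : ℝ) + 1)) := by
  refine Summable.of_nonneg_of_le (fun k => by positivity) (fun k => ?_)
    (summable_geometric_of_lt_one h0 h1)
  calc s ^ (k + 1) / (2 * (k : ℝ) + 1) ≤ s ^ (k + 1) / 1 := by
        gcongr
        linarith [Nat.cast_nonneg (α := ℝ) k]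
    _ = s ^ k * s := by rw [div_one, pow_succ]
    _ ≤ s ^ k * 1 := by
        gcongr
    _ = s ^ k := mul_one _

lemma tanh_abs_lt_one (u : ℝ) : |Real.tanh u| < 1 := by
  rw [Real.tanh_eq_sinh_div_cosh, abs_div, abs_of_pos (Real.cosh_pos u),
    div_lt_one (Real.cosh_pos u)]
  nlinarith [Real.cosh_sq u, Real.cosh_pos u, sq_abs (Real.sinh u), abs_nonneg (Real.sinh u)]

lemma log_ratio (u : ℝ) :
    Real.log (1 + Real.tanh u) - Real.log (1 - Real.tanh u) = 2 * u := by
  have hc := Real.cosh_pos u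
  have h1 : 1 + Real.tanh u = Real.exp u / Real.cosh u := by
    rw [Real.tanh_eq_sinh_div_cosh, ← Real.cosh_add_sinh u]
    field_simp
  have h2 : 1 - Real.tanh u = Real.exp (-u) / Real.cosh u := by
    rw [Real.tanh_eq_sinh_div_cosh, ← Real.cosh_sub_sinh u]
    field_simp
  rw [h1, h2, Real.log_div (Real.exp_ne_zero _) hc.ne',
    Real.log_div (Real.exp_ne_zero _) hc.ne', Real.log_exp, Real.log_exp]
  ring

lemma hasSum_FF_tanh (u : ℝ) :
    HasSum (fun k : ℕ => (Real.tanh u ^ 2) ^ (k + 1) / (2 * (k : ℝ) + 1))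
      (u * Real.tanh u) := by
  have h := hasSum_log_sub_log_of_abs_lt_one (tanh_abs_lt_one u)
  have hfun : (fun k : ℕ => (Real.tanh u ^ 2) ^ (k + 1) / (2 * (k : ℝ) + 1))
      = fun k : ℕ => (2 : ℝ) * (1 / (2 * (k : ℝ) + 1)) * Real.tanh u ^ (2 * k + 1)
          * (Real.tanh u / 2) := by
    funext k
    have hp : (Real.tanh u ^ 2) ^ (k + 1) = Real.tanh u ^ (2 * k + 1) * Real.tanh u := by
      rw [← pow_mul, ← pow_succ]
      ring_nf
    rw [hp]; ring
  have hval : u * Real.tanh u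
      = (Real.log (1 + Real.tanh u) - Real.log (1 - Real.tanh u)) * (Real.tanh u / 2) := by
    rw [log_ratio]; ring
  rw [hfun, hval]
  exact h.mul_right _

lemma FF_tanh (u : ℝ) : FF (Real.tanh u ^ 2) = u * Real.tanh u :=
  (hasSum_FF_tanh u).tsum_eq

lemma tanh_sq_lt_one (u : ℝ) : Real.tanh u ^ 2 < 1 := by
  have := tanh_abs_lt_one u
  nlinarith [sq_abs (Real.tanh u), abs_nonneg (Real.tanh u)]

lemma FF_add_le {a b : ℝ} (h0 : 0 ≤ a) (hab : a ≤ b) (h1 : b < 1) :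
    FF a + (b - a) ≤ FF b := by
  have ha1 : a < 1 := lt_of_le_of_lt hab h1
  have hsa := summable_FF h0 ha1
  have hsb := summable_FF (h0.trans hab) h1
  have hg : HasSum
      (fun k : ℕ => a ^ (k + 1) / (2 * (k : ℝ) + 1) + (if k = 0 then b - a else 0))
      (FF a + (b - a)) := hsa.hasSum.add (hasSum_ite_eq 0 (b - a))
  refine hasSum_le (fun k => ?_) hg hsb.hasSum
  rcases eq_or_ne k 0 with rfl | hk
  · norm_num
  · simp only [hk, if_false, add_zero]
    gcongr

lemma FF_jensen {n : ℕ} (hn : 0 < n) (w t : Fin n → ℝ) (hw : ∀ i, 0 < w i)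
    (hw1 : ∑ i, w i = 1) (ht0 : ∀ i, 0 ≤ t i) (ht1 : ∀ i, t i < 1) :
    FF (∑ i, w i * t i) ≤ ∑ i, w i * FF (t i) := by
  have : Nonempty (Fin n) := ⟨⟨0, hn⟩⟩
  have hne : (univ : Finset (Fin n)).Nonempty := univ_nonempty
  have hs0 : 0 ≤ ∑ i, w i * t i :=
    Finset.sum_nonneg fun i _ => mul_nonneg (hw i).le (ht0 i)
  have hs1 : ∑ i, w i * t i < 1 := by
    have hc1 : univ.sup' hne t < 1 := (Finset.sup'_lt_iff hne).2 fun i _ => ht1 i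
    calc ∑ i, w i * t i ≤ ∑ i, w i * univ.sup' hne t :=
          Finset.sum_le_sum fun i _ =>
            mul_le_mul_of_nonneg_left (Finset.le_sup' t (mem_univ i)) (hw i).le
      _ = univ.sup' hne t := by rw [← Finset.sum_mul, hw1, one_mul]
      _ < 1 := hc1
  have hterm : ∀ k : ℕ,
      (∑ i, w i * t i) ^ (k + 1) / (2 * (k : ℝ) + 1)
        ≤ ∑ i, w i * (t i ^ (k + 1) / (2 * (k : ℝ) + 1)) := by
    intro k
    have hpow := (convexOn_pow (k + 1)).map_sum_le (fun i (_ : i ∈ univ) => (hw i).le)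
      hw1 (fun i _ => Set.mem_Ici.2 (ht0 i))
    simp only [smul_eq_mul] at hpow
    have hd : (0 : ℝ) < 2 * (k : ℝ) + 1 := by positivity
    calc (∑ i, w i * t i) ^ (k + 1) / (2 * (k : ℝ) + 1)
        ≤ (∑ i, w i * t i ^ (k + 1)) / (2 * (k : ℝ) + 1) := by gcongr
      _ = ∑ i, w i * (t i ^ (k + 1) / (2 * (k : ℝ) + 1)) := by
          rw [Finset.sum_div]; exact Finset.sum_congr rfl fun i _ => by ring
  have hsi : ∀ i : Fin n,
      Summable (fun k : ℕ => w i * (t i ^ (k + 1) / (2 * (k : ℝ) + 1))) :=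
    fun i => (summable_FF (ht0 i) (ht1 i)).mul_left (w i)
  calc FF (∑ i, w i * t i)
      ≤ ∑' k : ℕ, ∑ i, w i * (t i ^ (k + 1) / (2 * (k : ℝ) + 1)) :=
        Summable.tsum_le_tsum hterm (summable_FF hs0 hs1)
          (summable_sum fun i _ => hsi i)
    _ = ∑ i, ∑' k : ℕ, w i * (t i ^ (k + 1) / (2 * (k : ℝ) + 1)) :=
        Summable.tsum_finsetSum fun i _ => hsi i
    _ = ∑ i, w i * FF (t i) := by
        exact Finset.sum_congr rfl fun i _ => tsum_mul_left

lemma FF_zero : FF 0 = 0 := by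
  have h := FF_tanh 0
  simpa [Real.tanh_zero] using h

lemma self_le_FF {s : ℝ} (h0 : 0 ≤ s) (h1 : s < 1) : s ≤ FF s := by
  have := FF_add_le le_rfl h0 h1
  rw [FF_zero] at this
  linarith

lemma tanh_half_log {p q : ℝ} (hp : 0 < p) (hq : 0 < q) :
    Real.tanh ((Real.log p - Real.log q) / 2) = (p - q) / (p + q) := by
  set z := (Real.log p - Real.log q) / 2 with hz
  have hE : 0 < Real.exp z := Real.exp_pos z
  have hE2 : Real.exp z ^ 2 = p / q := by
    rw [sq, ← Real.exp_add, hz]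
    have : (Real.log p - Real.log q) / 2 + (Real.log p - Real.log q) / 2
        = Real.log p - Real.log q := by ring
    rw [this, Real.exp_sub, Real.exp_log hp, Real.exp_log hq]
  rw [Real.tanh_eq_sinh_div_cosh, Real.sinh_eq, Real.cosh_eq, Real.exp_neg]
  have hpq : 0 < p + q := by linarith
  rw [div_eq_div_iff (by positivity) (by positivity)]
  have h := hE2
  field_simp at h ⊢
  nlinarith [h, hE, hq]

/-- Jensen-type bound used in the quantum TKUR proof: for positive `xᵢ, yᵢ`, setting
`σᵢ = (xᵢ − yᵢ) ln(xᵢ/yᵢ)`, `aᵢ = xᵢ + yᵢ`, `σ = Σ σᵢ`, `a = Σ aᵢ`, concavity of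
`g(σ,a) = (σ²/a) Φ(σ/a)⁻²` gives
`Σᵢ (xᵢ−yᵢ)²/(xᵢ+yᵢ) ≤ (σ²/(4a)) Φ(σ/(2a))⁻² ≤ min (σ/2) a`,
where `Φ` is the (even extension of the) inverse of `x ↦ x tanh x`. -/
theorem jensen_tkur_bound {n : ℕ} (hn : 0 < n)
    (Φ : ℝ → ℝ)
    (hΦ_nonneg : ∀ x ≥ (0 : ℝ), 0 ≤ Φ x)
    (hΦ_left : ∀ x ≥ (0 : ℝ), Φ (x * Real.tanh x) = x)
    (hΦ_right : ∀ x ≥ (0 : ℝ), (Φ x) * Real.tanh (Φ x) = x)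
    (hΦ_even : ∀ x : ℝ, Φ x = Φ |x|)
    (x y : Fin n → ℝ) (hx : ∀ i, 0 < x i) (hy : ∀ i, 0 < y i) :
    (∑ i, (x i - y i) ^ 2 / (x i + y i))
      ≤ ((∑ i, (x i - y i) * Real.log (x i / y i)) ^ 2 / (4 * ∑ i, (x i + y i))) *
          ((Φ ((∑ i, (x i - y i) * Real.log (x i / y i)) / (2 * ∑ i, (x i + y i))))⁻¹) ^ 2 ∧
    ((∑ i, (x i - y i) * Real.log (x i / y i)) ^ 2 / (4 * ∑ i, (x i + y i))) *
        ((Φ ((∑ i, (x i - y i) * Real.log (x i / y i)) / (2 * ∑ i, (x i + y i))))⁻¹) ^ 2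
      ≤ min ((∑ i, (x i - y i) * Real.log (x i / y i)) / 2) (∑ i, (x i + y i)) := by
  have : Nonempty (Fin n) := ⟨⟨0, hn⟩⟩
  have hxy : ∀ i, 0 < x i + y i := fun i => add_pos (hx i) (hy i)
  set u : Fin n → ℝ := fun i => (Real.log (x i) - Real.log (y i)) / 2 with hu
  set t : Fin n → ℝ := fun i => Real.tanh (u i) ^ 2 with ht
  have htanh : ∀ i, Real.tanh (u i) = (x i - y i) / (x i + y i) := fun i =>
    tanh_half_log (hx i) (hy i)
  have ht0 : ∀ i, 0 ≤ t i := fun i => sq_nonneg _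
  have ht1 : ∀ i, t i < 1 := fun i => _root_.tanh_sq_lt_one _
  have hlog : ∀ i, Real.log (x i / y i) = 2 * u i := by
    intro i
    rw [Real.log_div (hx i).ne' (hy i).ne']
    simp only [hu]
    ring
  have hsig : ∀ i, (x i - y i) * Real.log (x i / y i)
      = 2 * (x i + y i) * (u i * Real.tanh (u i)) := by
    intro i
    rw [hlog i, htanh i]
    field_simp [(hxy i).ne']
  set A := ∑ i, (x i + y i) with hA
  set S := ∑ i, (x i - y i) * Real.log (x i / y i) with hS
  have hA0 : 0 < A := Finset.sum_pos (fun i _ => hxy i) univ_nonempty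
  set w : Fin n → ℝ := fun i => (x i + y i) / A with hw
  have hwpos : ∀ i, 0 < w i := fun i => div_pos (hxy i) hA0
  have hw1 : ∑ i, w i = 1 := by
    rw [hw, ← Finset.sum_div, ← hA, div_self hA0.ne']
  set sbar := ∑ i, w i * t i with hsbar
  have hsbar0 : 0 ≤ sbar :=
    Finset.sum_nonneg fun i _ => mul_nonneg (hwpos i).le (ht0 i)
  have hsbar1 : sbar < 1 := by
    have hne : (univ : Finset (Fin n)).Nonempty := univ_nonempty
    have hc1 : univ.sup' hne t < 1 := (Finset.sup'_lt_iff hne).2 fun i _ => ht1 i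
    calc sbar ≤ ∑ i, w i * univ.sup' hne t :=
          Finset.sum_le_sum fun i _ =>
            mul_le_mul_of_nonneg_left (Finset.le_sup' t (mem_univ i)) (hwpos i).le
      _ = univ.sup' hne t := by rw [← Finset.sum_mul, hw1, one_mul]
      _ < 1 := hc1
  have hLHS : ∑ i, (x i - y i) ^ 2 / (x i + y i) = A * sbar := by
    rw [hsbar, Finset.mul_sum]
    refine Finset.sum_congr rfl fun i _ => ?_
    rw [ht]
    simp only
    rw [htanh i, hw]
    simp only
    rw [div_pow]
    field_simp [(hxy i).ne', hA0.ne']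
  have hτeq : ∑ i, w i * FF (t i) = S / (2 * A) := by
    have h1 : ∀ i, w i * FF (t i)
        = ((x i - y i) * Real.log (x i / y i)) / (2 * A) := by
      intro i
      rw [ht]
      simp only
      rw [FF_tanh (u i), hsig i, hw]
      simp only
      field_simp [(hxy i).ne', hA0.ne']
    rw [Finset.sum_congr rfl fun i _ => h1 i, ← Finset.sum_div, ← hS]
  have hjen : FF sbar ≤ S / (2 * A) := by
    rw [← hτeq]
    exact FF_jensen hn w t hwpos hw1 ht0 ht1
  have hτ0 : 0 ≤ S / (2 * A) := by
    rw [← hτeq]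
    refine Finset.sum_nonneg fun i _ => mul_nonneg (hwpos i).le ?_
    rw [ht]
    simp only
    rw [FF_tanh (u i)]
    calc (0:ℝ) ≤ Real.tanh (u i) ^ 2 := sq_nonneg _
      _ ≤ FF (Real.tanh (u i) ^ 2) := self_le_FF (sq_nonneg _) (_root_.tanh_sq_lt_one _)
      _ = u i * Real.tanh (u i) := FF_tanh (u i)
  set U := Φ (S / (2 * A)) with hUdef
  have hU0 : 0 ≤ U := hΦ_nonneg _ hτ0
  have hUr : U * Real.tanh U = S / (2 * A) := hΦ_right _ hτ0
  have hkey : sbar ≤ Real.tanh U ^ 2 := by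
    by_contra hcon
    push_neg at hcon
    have h1 := FF_add_le (sq_nonneg (Real.tanh U)) hcon.le hsbar1
    rw [FF_tanh U, hUr] at h1
    linarith
  have hmain : ∑ i, (x i - y i) ^ 2 / (x i + y i) ≤ A * Real.tanh U ^ 2 := by
    rw [hLHS]
    exact mul_le_mul_of_nonneg_left hkey hA0.le
  rcases eq_or_lt_of_le hτ0 with hz | hτpos
  · -- S/(2A) = 0, hence S = 0
    have hS0 : S = 0 := by
      have h2A : (2 * A) ≠ 0 := by positivity
      field_simp [h2A] at hz
      linarith
    have hsb0 : sbar ≤ 0 := by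
      have := self_le_FF hsbar0 hsbar1
      rw [hS0] at hjen
      simp at hjen
      linarith
    constructor
    · rw [hS0]
      simp only [ne_eq, OfNat.ofNat_ne_zero, not_false_eq_true, zero_pow, zero_div, zero_mul]
      rw [hLHS]
      nlinarith [hA0]
    · rw [hS0]
      simp only [ne_eq, OfNat.ofNat_ne_zero, not_false_eq_true, zero_pow, zero_div, zero_mul]
      exact le_min (by norm_num) hA0.le
  · have hUpos : 0 < U := by
      rcases hU0.lt_or_eq with h | h
      · exact h
      · exfalso
        rw [← h, Real.tanh_zero, mul_zero] at hUr
        rw [← hUr] at hτpos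
        exact lt_irrefl 0 hτpos
    have hSeq : S = 2 * A * (U * Real.tanh U) := by
      rw [hUr]
      field_simp
    have htU0 : 0 ≤ Real.tanh U := by
      rw [Real.tanh_eq_sinh_div_cosh]
      exact div_nonneg (Real.sinh_nonneg_iff.2 hU0) (Real.cosh_pos U).le
    have hRHS : S ^ 2 / (4 * A) * (U⁻¹) ^ 2 = A * Real.tanh U ^ 2 := by
      rw [hSeq]
      field_simp
      ring
    have hsq : Real.tanh U ^ 2 ≤ U * Real.tanh U := by
      have h := self_le_FF (sq_nonneg (Real.tanh U)) (_root_.tanh_sq_lt_one U)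
      rwa [FF_tanh U] at h
    constructor
    · rw [hRHS]; exact hmain
    · rw [hRHS]
      refine le_min ?_ ?_
      · calc A * Real.tanh U ^ 2 ≤ A * (U * Real.tanh U) :=
              mul_le_mul_of_nonneg_left hsq hA0.le
          _ = S / 2 := by rw [hSeq]; ring
      · calc A * Real.tanh U ^ 2 ≤ A * 1 :=
              mul_le_mul_of_nonneg_left (_root_.tanh_sq_lt_one U).le hA0.le
          _ = A := mul_one A
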